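/- Let μ be a moment map for a Hamiltonian G-action on a Kähler manifold and x(t) a solution of the generalized system ∂x/∂t + Iρ_x(Ω) = 0, ∂Ω/∂t + ρ_x*ρ_x(Ω) = 0 with initial conditions x(0) = x₀, Ω(0) = *μ(x₀). Then Ω(t) = *μ(x(t)) for all t: the function ψ(t) = Ω(t) − *μ(x(t)) satisfies ψ' = 0 and ψ(0) = 0. -/

import Mathlib

open scoped RealInnerProductSpace

/-- If `(x(t), Ω(t))` solves the generalized system `∂x/∂t + Iρ_x(Ω) = 0`,
`∂Ω/∂t + ρ_x*ρ_x(Ω) = 0` with `x(0) = x₀` and `Ω(0) = *μ(x₀)`, then `Ω(t) = *μ(x(t))` for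
all `t` (the function `ψ = Ω − *μ(x)` satisfies `ψ' = 0`, `ψ(0) = 0`). -/
theorem stmt_12 {M 𝔤 : Type*} [NormedAddCommGroup M] [InnerProductSpace ℝ M] [CompleteSpace M]
    [NormedAddCommGroup 𝔤] [InnerProductSpace ℝ 𝔤] [CompleteSpace 𝔤]
    (I : M →L[ℝ] M) (hII : ∀ X : M, I (I X) = -X)
    (hIorth : ∀ X Y : M, ⟪I X, I Y⟫ = ⟪X, Y⟫)
    (ρ : M → 𝔤 →L[ℝ] M) (μ : M → 𝔤) (hμ : Differentiable ℝ μ)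
    (hmoment : ∀ (x : M) (u : 𝔤) (X : M), ⟪fderiv ℝ μ x X, u⟫ = ⟪I (ρ x u), X⟫)
    (x : ℝ → M) (Ω : ℝ → 𝔤)
    (hx : ∀ t : ℝ, HasDerivAt x (-(I (ρ (x t) (Ω t)))) t)
    (hΩ : ∀ t : ℝ, HasDerivAt Ω
      (-(ContinuousLinearMap.adjoint (ρ (x t)) ((ρ (x t)) (Ω t)))) t)
    (h0 : Ω 0 = μ (x 0)) :
    ∀ t : ℝ, Ω t = μ (x t) := by
  set ψ : ℝ → 𝔤 := fun t => Ω t - μ (x t) with hψ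
  have key : ∀ t : ℝ, HasDerivAt ψ 0 t := by
    intro t
    have hcomp : HasDerivAt (fun s => μ (x s))
        (fderiv ℝ μ (x t) (-(I (ρ (x t) (Ω t))))) t :=
      ((hμ (x t)).hasFDerivAt.comp_hasDerivAt t (hx t))
    have heq : fderiv ℝ μ (x t) (-(I (ρ (x t) (Ω t)))) =
        -(ContinuousLinearMap.adjoint (ρ (x t)) ((ρ (x t)) (Ω t))) := by
      apply ext_inner_right ℝ
      intro u
      rw [hmoment]
      rw [inner_neg_right, inner_neg_left]
      congr 1
      calc ⟪I (ρ (x t) u), I (ρ (x t) (Ω t))⟫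
          = ⟪ρ (x t) u, ρ (x t) (Ω t)⟫ := hIorth _ _
        _ = ⟪ContinuousLinearMap.adjoint (ρ (x t)) (ρ (x t) (Ω t)), u⟫ := by
            rw [real_inner_comm, ContinuousLinearMap.adjoint_inner_left]
    have := (hΩ t).sub (heq ▸ hcomp)
    exact this.congr_deriv (sub_self _)
  intro t
  have hconst : ψ t = ψ 0 :=
    is_const_of_deriv_eq_zero (fun s => (key s).differentiableAt)
      (fun s => (key s).deriv) t 0
  have : ψ 0 = 0 := by simp [hψ, h0]
  have ht : ψ t = 0 := hconst.trans this
  simpa [hψ, sub_eq_zero] using ht
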